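/- Let f ∈ L^1_loc(ℝⁿ). Define MQf(x) = sup_{r>0} (1/|B(x,r)|) ∫_{B(x,r)} |f(z) - f(x)|/|z - x| dz. Then for every pair of points x ≠ y at which MQf is defined (e.g. Lebesgue points), |f(x) - f(y)| ≤ c(n) |x - y| (MQf(x) + MQf(y)), where c(n) = |B(x,r)| / |B(x,r) ∩ B(y,r)| with r = |x - y| is a dimensional constant. -/

import Mathlib

open MeasureTheory Metric
open Pointwise
set_option maxHeartbeats 1000000

/-- The maximal mean difference quotient
`MQf(x) = sup_{r>0} ⨍_{B(x,r)} |f z - f x| / ‖z - x‖ dz` (with values in `ℝ≥0∞`). -/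
noncomputable def MQ {n : ℕ} (f : EuclideanSpace ℝ (Fin n) → ℝ)
    (x : EuclideanSpace ℝ (Fin n)) : ENNReal :=
  ⨆ (r : ℝ) (_ : 0 < r),
    (volume (ball x r))⁻¹ *
      ∫⁻ z in ball x r, ENNReal.ofReal (|f z - f x| / ‖z - x‖)

section aux
variable {n : ℕ}

lemma lens_volume (hn : 0 < n) (x y : EuclideanSpace ℝ (Fin n)) (hxy : x ≠ y) :
    volume (ball x ‖x - y‖ ∩ ball y ‖x - y‖) =
      ENNReal.ofReal (‖x - y‖ ^ n) *
        volume (ball (0 : EuclideanSpace ℝ (Fin n)) 1 ∩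
          ball (EuclideanSpace.single (⟨0, hn⟩ : Fin n) (1 : ℝ)) 1) := by
  have hr : 0 < ‖x - y‖ := by
    rw [norm_pos_iff]; exact sub_ne_zero.mpr hxy
  set r := ‖x - y‖ with hrdef
  set e : EuclideanSpace ℝ (Fin n) := EuclideanSpace.single (⟨0, hn⟩ : Fin n) (1 : ℝ) with he
  set u : EuclideanSpace ℝ (Fin n) := r⁻¹ • (y - x) with hu
  have hen : ‖e‖ = 1 := by
    rw [he, EuclideanSpace.norm_single]; norm_num
  have hun : ‖u‖ = 1 := by
    rw [hu, norm_smul, norm_sub_rev, ← hrdef, Real.norm_eq_abs, abs_of_pos (inv_pos.2 hr),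
      inv_mul_cancel₀ hr.ne']
  obtain ⟨A, hAe⟩ : ∃ A : EuclideanSpace ℝ (Fin n) ≃ₗᵢ[ℝ] EuclideanSpace ℝ (Fin n), A e = u :=
    ⟨Submodule.reflection (Submodule.span ℝ {e - u})ᗮ, Submodule.reflection_sub (by rw [hen, hun])⟩
  have step1 : (fun z => x + z) ⁻¹' (ball x r ∩ ball y r) = ball 0 r ∩ ball (y - x) r := by
    ext z
    simp only [Set.preimage_inter, Set.mem_inter_iff, Set.mem_preimage, mem_ball,
      dist_eq_norm]
    constructor <;> rintro ⟨h1, h2⟩ <;> constructor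
    · simpa using h1
    · have : x + z - y = z - (y - x) := by abel
      rwa [this] at h2
    · simpa using h1
    · have : x + z - y = z - (y - x) := by abel
      rwa [this]
  have step2 : ball (0 : EuclideanSpace ℝ (Fin n)) r ∩ ball (y - x) r =
      r • (ball 0 1 ∩ ball u 1) := by
    rw [Set.smul_set_inter₀ hr.ne', _root_.smul_ball hr.ne', _root_.smul_ball hr.ne', smul_zero,
      Real.norm_eq_abs, abs_of_pos hr, mul_one, hu, smul_smul, mul_inv_cancel₀ hr.ne', one_smul]
  have step3 : (A : EuclideanSpace ℝ (Fin n) → EuclideanSpace ℝ (Fin n)) ⁻¹'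
      (ball 0 1 ∩ ball u 1) = ball 0 1 ∩ ball e 1 := by
    ext z
    simp only [Set.preimage_inter, Set.mem_inter_iff, Set.mem_preimage, mem_ball]
    have h0 : dist (A z) 0 = dist z 0 := by
      conv_lhs => rw [show (0 : EuclideanSpace ℝ (Fin n)) = A 0 by simp]
      exact A.dist_map z 0
    have h1 : dist (A z) u = dist z e := by
      conv_lhs => rw [← hAe]
      exact A.dist_map z e
    rw [h0, h1]
  have m1 : volume (ball x r ∩ ball y r) =
      volume (ball (0 : EuclideanSpace ℝ (Fin n)) r ∩ ball (y - x) r) := by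
    rw [← step1]
    exact (measure_preimage_add volume x _).symm
  have m3 : volume (ball (0 : EuclideanSpace ℝ (Fin n)) 1 ∩ ball u 1) =
      volume (ball (0 : EuclideanSpace ℝ (Fin n)) 1 ∩ ball e 1) := by
    have hms : MeasurableSet (ball (0 : EuclideanSpace ℝ (Fin n)) 1 ∩ ball u 1) :=
      measurableSet_ball.inter measurableSet_ball
    have hmp : MeasurePreserving (A : EuclideanSpace ℝ (Fin n) → EuclideanSpace ℝ (Fin n))
        volume volume := A.measurePreserving
    rw [← step3]
    exact (hmp.measure_preimage hms.nullMeasurableSet).symm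
  rw [m1, step2, Measure.addHaar_smul, m3, finrank_euclideanSpace_fin,
    abs_of_pos (pow_pos hr n)]

end aux

/-- There is a dimensional constant `c(n)`, namely the ratio
`|B(x,r)| / |B(x,r) ∩ B(y,r)|` with `r = ‖x - y‖`, such that for every locally
integrable `f` and all `x ≠ y`,
`|f x - f y| ≤ c(n) ‖x - y‖ (MQf(x) + MQf(y))`. -/
theorem pointwise_sobolev_ineq_MQ {n : ℕ} (hn : 0 < n) :
    ∃ c : ℝ, 0 < c ∧
      (∀ x y : EuclideanSpace ℝ (Fin n), x ≠ y →
        volume (ball x ‖x - y‖) =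
          ENNReal.ofReal c * volume (ball x ‖x - y‖ ∩ ball y ‖x - y‖)) ∧
      ∀ f : EuclideanSpace ℝ (Fin n) → ℝ, LocallyIntegrable f volume →
        ∀ x y : EuclideanSpace ℝ (Fin n), x ≠ y →
          ENNReal.ofReal |f x - f y| ≤
            ENNReal.ofReal (c * ‖x - y‖) * (MQ f x + MQ f y) := by
  set e : EuclideanSpace ℝ (Fin n) := EuclideanSpace.single (⟨0, hn⟩ : Fin n) (1 : ℝ) with he
  have hen : ‖e‖ = 1 := by rw [he, EuclideanSpace.norm_single]; norm_num
  haveI : Nontrivial (EuclideanSpace ℝ (Fin n)) := nontrivial_of_ne e 0 (by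
    intro h; rw [h, norm_zero] at hen; norm_num at hen)
  set S : Set (EuclideanSpace ℝ (Fin n)) := ball 0 1 ∩ ball e 1 with hS
  have hsub : ball ((2⁻¹ : ℝ) • e) 2⁻¹ ⊆ S := by
    intro z hz
    rw [mem_ball, dist_eq_norm] at hz
    have hm : ‖(2⁻¹ : ℝ) • e‖ = 2⁻¹ := by
      rw [norm_smul, hen, Real.norm_eq_abs]; norm_num
    constructor
    · rw [mem_ball, dist_eq_norm, sub_zero]
      calc ‖z‖ ≤ ‖z - (2⁻¹ : ℝ) • e‖ + ‖(2⁻¹ : ℝ) • e‖ := by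
            simpa using norm_add_le (z - (2⁻¹ : ℝ) • e) ((2⁻¹ : ℝ) • e)
        _ < 2⁻¹ + 2⁻¹ := by rw [hm]; exact add_lt_add_left hz _
        _ = 1 := by norm_num
    · rw [mem_ball, dist_eq_norm]
      have hme : ‖(2⁻¹ : ℝ) • e - e‖ = 2⁻¹ := by
        have : (2⁻¹ : ℝ) • e - e = (-(2⁻¹) : ℝ) • e := by
          rw [neg_smul]
          rw [show e = (1:ℝ) • e from (one_smul ℝ e).symm]
          module
        rw [this, norm_smul, hen, Real.norm_eq_abs]; norm_num
      calc ‖z - e‖ ≤ ‖z - (2⁻¹ : ℝ) • e‖ + ‖(2⁻¹ : ℝ) • e - e‖ := norm_sub_le_norm_sub_add_norm_sub z _ e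
        _ < 2⁻¹ + 2⁻¹ := by rw [hme]; exact add_lt_add_left hz _
        _ = 1 := by norm_num
  have hS0 : volume S ≠ 0 :=
    ((measure_ball_pos volume _ (by norm_num : (0:ℝ) < 2⁻¹)).trans_le (measure_mono hsub)).ne'
  have hSt : volume S ≠ ⊤ :=
    ((measure_mono (Set.inter_subset_left)).trans_lt measure_ball_lt_top).ne
  have hB0 : volume (ball (0 : EuclideanSpace ℝ (Fin n)) 1) ≠ 0 :=
    (measure_ball_pos volume _ one_pos).ne'
  have hBt : volume (ball (0 : EuclideanSpace ℝ (Fin n)) 1) ≠ ⊤ := measure_ball_lt_top.ne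
  set c : ℝ := (volume (ball (0 : EuclideanSpace ℝ (Fin n)) 1) / volume S).toReal with hcdef
  have hdivt : volume (ball (0 : EuclideanSpace ℝ (Fin n)) 1) / volume S ≠ ⊤ :=
    (ENNReal.div_lt_top hBt hS0).ne
  have hoc : ENNReal.ofReal c = volume (ball (0 : EuclideanSpace ℝ (Fin n)) 1) / volume S :=
    ENNReal.ofReal_toReal hdivt
  have hc : 0 < c := ENNReal.toReal_pos (ENNReal.div_ne_zero.mpr ⟨hB0, hSt⟩) hdivt
  have hvol : ∀ x y : EuclideanSpace ℝ (Fin n), x ≠ y →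
      volume (ball x ‖x - y‖) =
        ENNReal.ofReal c * volume (ball x ‖x - y‖ ∩ ball y ‖x - y‖) := by
    intro x y hxy
    have hr : 0 < ‖x - y‖ := by rw [norm_pos_iff]; exact sub_ne_zero.mpr hxy
    rw [lens_volume hn x y hxy, Measure.addHaar_ball _ x hr.le, finrank_euclideanSpace_fin,
      hoc, ← he, ← hS]
    rw [mul_comm (ENNReal.ofReal (‖x - y‖ ^ n)) (volume S), ← mul_assoc,
      ENNReal.div_mul_cancel hS0 hSt, mul_comm]
  refine ⟨c, hc, hvol, ?_⟩
  intro f hf x y hxy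
  have hr : 0 < ‖x - y‖ := by rw [norm_pos_iff]; exact sub_ne_zero.mpr hxy
  set r := ‖x - y‖ with hrdef
  set L : Set (EuclideanSpace ℝ (Fin n)) := ball x r ∩ ball y r with hLdef
  have hvolxy : volume (ball x r) = ENNReal.ofReal c * volume L := hvol x y hxy
  have hBx0 : volume (ball x r) ≠ 0 := (measure_ball_pos volume x hr).ne'
  have hBxt : volume (ball x r) ≠ ⊤ := measure_ball_lt_top.ne
  have hL0 : volume L ≠ 0 := by
    intro h0; exact hBx0 (by rw [hvolxy, h0, mul_zero])
  have hLt : volume L ≠ ⊤ :=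
    ((measure_mono (Set.inter_subset_left)).trans_lt measure_ball_lt_top).ne
  have hc0 : ENNReal.ofReal c ≠ 0 := (ENNReal.ofReal_pos.mpr hc).ne'
  have hinv : (volume L)⁻¹ = ENNReal.ofReal c * (volume (ball x r))⁻¹ := by
    rw [hvolxy, ENNReal.mul_inv (Or.inl hc0) (Or.inl ENNReal.ofReal_ne_top), ← mul_assoc,
      ENNReal.mul_inv_cancel hc0 ENNReal.ofReal_ne_top, one_mul]
  have hBy : volume (ball y r) = volume (ball x r) := by
    rw [Measure.addHaar_ball _ _ hr.le, Measure.addHaar_ball _ _ hr.le]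
  have hinvy : (volume L)⁻¹ = ENNReal.ofReal c * (volume (ball y r))⁻¹ := by
    rw [hBy]; exact hinv
  set g1 : EuclideanSpace ℝ (Fin n) → ENNReal :=
    fun z => ENNReal.ofReal (r * (|f z - f x| / ‖z - x‖)) with hg1def
  set g2 : EuclideanSpace ℝ (Fin n) → ENNReal :=
    fun z => ENNReal.ofReal (r * (|f z - f y| / ‖z - y‖)) with hg2def
  have hfae : AEMeasurable f volume := hf.aestronglyMeasurable.aemeasurable
  have hmeas : ∀ (w : EuclideanSpace ℝ (Fin n)) (μ : Measure (EuclideanSpace ℝ (Fin n))),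
      μ ≤ volume → AEMeasurable (fun z => ENNReal.ofReal (r * (|f z - f w| / ‖z - w‖))) μ := by
    intro w μ hμ
    apply ENNReal.measurable_ofReal.comp_aemeasurable
    apply AEMeasurable.const_mul
    apply AEMeasurable.div
    · exact continuous_abs.measurable.comp_aemeasurable
        ((hfae.mono' (Measure.absolutelyContinuous_of_le hμ)).sub aemeasurable_const)
    · exact ((continuous_id.sub continuous_const).norm).measurable.aemeasurable
  have hg1 : AEMeasurable g1 (volume.restrict L) :=
    hmeas x _ Measure.restrict_le_self
  have hg2 : AEMeasurable g2 (volume.restrict L) :=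
    hmeas y _ Measure.restrict_le_self
  have keybound : ∀ z ∈ L, ENNReal.ofReal |f x - f y| ≤ g1 z + g2 z := by
    intro z hz
    have bd : ∀ (w : EuclideanSpace ℝ (Fin n)), z ∈ ball w r →
        |f z - f w| ≤ r * (|f z - f w| / ‖z - w‖) := by
      intro w hw
      rcases eq_or_ne z w with rfl | hzw
      · simp [mul_nonneg hr.le (div_nonneg (abs_nonneg _) (norm_nonneg _))]
      · have hnz : 0 < ‖z - w‖ := by rw [norm_pos_iff]; exact sub_ne_zero.mpr hzw
        have hlt : ‖z - w‖ ≤ r := by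
          rw [mem_ball, dist_eq_norm] at hw; exact hw.le
        calc |f z - f w| = (|f z - f w| / ‖z - w‖) * ‖z - w‖ := by
              rw [div_mul_cancel₀ _ hnz.ne']
          _ = ‖z - w‖ * (|f z - f w| / ‖z - w‖) := by ring
          _ ≤ r * (|f z - f w| / ‖z - w‖) :=
              mul_le_mul_of_nonneg_right hlt (div_nonneg (abs_nonneg _) (norm_nonneg _))
    have t1 := bd x hz.1
    have t2 := bd y hz.2
    have tri : |f x - f y| ≤ |f z - f x| + |f z - f y| := by
      have h1 := abs_sub_le (f x) (f z) (f y)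
      have h2 : |f x - f z| = |f z - f x| := abs_sub_comm _ _
      linarith
    calc ENNReal.ofReal |f x - f y|
        ≤ ENNReal.ofReal (r * (|f z - f x| / ‖z - x‖) + r * (|f z - f y| / ‖z - y‖)) :=
          ENNReal.ofReal_le_ofReal (by linarith)
      _ ≤ g1 z + g2 z := ENNReal.ofReal_add_le
  have hMQ : ∀ w : EuclideanSpace ℝ (Fin n),
      (volume (ball w r))⁻¹ * ∫⁻ z in ball w r, ENNReal.ofReal (|f z - f w| / ‖z - w‖) ≤
        MQ f w := by
    intro w
    exact le_iSup₂ (f := fun (ρ : ℝ) (_ : 0 < ρ) =>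
      (volume (ball w ρ))⁻¹ * ∫⁻ z in ball w ρ, ENNReal.ofReal (|f z - f w| / ‖z - w‖)) r hr
  have e1 : ∀ (w : EuclideanSpace ℝ (Fin n)),
      (∫⁻ z in ball w r, ENNReal.ofReal (r * (|f z - f w| / ‖z - w‖))) =
        ENNReal.ofReal r * ∫⁻ z in ball w r, ENNReal.ofReal (|f z - f w| / ‖z - w‖) := by
    intro w
    rw [← lintegral_const_mul' _ _ ENNReal.ofReal_ne_top]
    congr 1
    funext z
    rw [ENNReal.ofReal_mul hr.le]
  calc ENNReal.ofReal |f x - f y|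
      = (volume L)⁻¹ * ∫⁻ _ in L, ENNReal.ofReal |f x - f y| := by
        rw [setLIntegral_const, mul_comm (ENNReal.ofReal |f x - f y|), ← mul_assoc,
          ENNReal.inv_mul_cancel hL0 hLt, one_mul]
    _ ≤ (volume L)⁻¹ * ∫⁻ z in L, (g1 z + g2 z) := by
        exact mul_le_mul_right
          (setLIntegral_mono_ae (hg1.add hg2) (Filter.Eventually.of_forall keybound)) _
    _ = (volume L)⁻¹ * ((∫⁻ z in L, g1 z) + ∫⁻ z in L, g2 z) := by
        rw [lintegral_add_left' hg1]
    _ ≤ (volume L)⁻¹ * ((∫⁻ z in ball x r, g1 z) + ∫⁻ z in ball y r, g2 z) :=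
        mul_le_mul_right (add_le_add (lintegral_mono_set Set.inter_subset_left)
          (lintegral_mono_set Set.inter_subset_right)) _
    _ = ENNReal.ofReal (c * r) *
        ((volume (ball x r))⁻¹ * (∫⁻ z in ball x r, ENNReal.ofReal (|f z - f x| / ‖z - x‖)) +
         (volume (ball y r))⁻¹ * ∫⁻ z in ball y r, ENNReal.ofReal (|f z - f y| / ‖z - y‖)) := by
        simp only [hg1def, hg2def]
        rw [e1 x, e1 y, mul_add, ENNReal.ofReal_mul hc.le]
        rw [mul_add]
        congr 1
        · rw [hinv]; ring
        · rw [hinvy]; ring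
    _ ≤ ENNReal.ofReal (c * r) * (MQ f x + MQ f y) :=
        mul_le_mul_right (add_le_add (hMQ x) (hMQ y)) _
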